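/- Let k be a field and P a finite graded poset of rank r with least element 0̂ and greatest element 1̂. If the reduced homology H̃_i(Δ(P_(i+3))) vanishes for all i with 0 ≤ i ≤ r−3, then the complex Z(P) is exact. -/

import Mathlib

open Finset

attribute [local instance] Classical.propDecidable

noncomputable section

variable (k : Type*) [Field k]
variable {P : Type*} [PartialOrder P] [BoundedOrder P] [Fintype P]

/-- Strictly decreasing chains `[F_0, F_1, …, F_{m-1}]` (so of `m` elements) with all entries
strictly between `0̂` and `F`: these are the `(m-1)`-dimensional faces of the order complex
`Δ(F)` of the lower interval `[0̂, F]`; for `m = 0` this is the empty chain. -/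
def DChain (P : Type*) [PartialOrder P] [BoundedOrder P] (m : ℕ) (F : P) : Type _ :=
  {f : Fin m → P // StrictAnti f ∧ ∀ t, ⊥ < f t ∧ f t < F}

/-- The space `C_{m-1}(Δ(F))` of `(m-1)`-dimensional chains of `Δ(F)`
(so `CC k 0 F = C_{-1}(Δ(F)) ≅ k`, spanned by the empty chain). -/
abbrev CC (m : ℕ) (F : P) : Type _ := DChain P m F →₀ k

/-- Deletion of the `j`-th entry of a chain. -/
def delChain {m : ℕ} {F : P} (c : DChain P (m + 1) F) (j : Fin (m + 1)) : DChain P m F :=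
  ⟨c.1 ∘ j.succAbove, c.2.1.comp_strictMono (Fin.strictMono_succAbove j),
    fun t => c.2.2 (j.succAbove t)⟩

/-- The simplicial boundary map `∂ : C_m(Δ(F)) → C_{m-1}(Δ(F))`,
`[F_0,…,F_m] ↦ Σ_j (−1)^j [F_0,…,F̂_j,…,F_m]` (for `m = 0` this is the augmentation
`[F_0] ↦ ∅`). -/
def bdry (m : ℕ) (F : P) : CC k (m + 1) F →ₗ[k] CC k m F :=
  Finsupp.lsum k fun c => LinearMap.toSpanSingleton k _
    (∑ j : Fin (m + 1), ((-1 : k) ^ (j : ℕ)) • Finsupp.single (delChain c j) (1 : k))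

/-- The cycle space: `cycles k m F` is `Z_{m-1}(Δ(F))`; in particular
`cycles k 0 F = Z_{-1}(Δ(F)) = C_{-1}(Δ(F)) ≅ k`. -/
def cycles : (m : ℕ) → (F : P) → Submodule k (CC k m F)
  | 0, _ => ⊤
  | (m + 1), F => LinearMap.ker (bdry k m F)

/-- The map `φ : C_m(Δ(F)) → C_{m-1}(Δ(F'))` sending `[F_0,…,F_m]` to `[F_1,…,F_m]` if
`F_0 = F'` and to `0` otherwise. -/
def phiMap (m : ℕ) (F F' : P) : CC k (m + 1) F →ₗ[k] CC k m F' :=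
  Finsupp.lsum k fun c => LinearMap.toSpanSingleton k _
    (if h : c.1 0 = F' then
      Finsupp.single
        (⟨fun t => c.1 t.succ, c.2.1.comp_strictMono (Fin.strictMono_succ),
          fun t => ⟨(c.2.2 t.succ).1,
            lt_of_lt_of_eq (c.2.1 (Fin.succ_pos t)) h⟩⟩ : DChain P m F') (1 : k)
    else 0)

/-- The canonical identification `C_{-1}(Δ(F)) = k = C_{-1}(Δ(F'))` (empty chain to empty
chain); it is used for the final map of the complex `Z(P)`. -/
def relabel (F F' : P) : CC k 0 F →ₗ[k] CC k 0 F' :=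
  Finsupp.lsum k fun _ => LinearMap.toSpanSingleton k _
    (Finsupp.single (⟨Fin.elim0, fun a => a.elim0, fun t => t.elim0⟩ : DChain P 0 F') (1 : k))

variable (rk : P → ℕ)

/-- The `j`-th module of the complex `Z(P)` (before restricting to cycles):
`⊕_{rk F = j} C_{j-2}(Δ(F))`; for `j = 0` this is `⊕_{rk F = 0} C_{-1}(Δ(F)) ≅ k` (there is
only `F = 0̂` of rank `0`), the final `k` of the complex. -/
abbrev levelMod (j : ℕ) : Type _ := Π F : {F : P // rk F = j}, CC k (j - 1) F.1

/-- One component of the differential of `Z(P)`. -/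
def step : (j : ℕ) → (F : P) → (F' : P) → (CC k j F →ₗ[k] CC k (j - 1) F')
  | 0, F, F' => relabel k F F'
  | (m + 1), F, F' => phiMap k m F F'

/-- The differential of the complex `Z(P)`, from level `j+1` to level `j` (for `j = 0` it is
the sum of the canonical identifications `Z_{-1}(Δ(F)) = k`). -/
def dmap (j : ℕ) : levelMod k rk (j + 1) →ₗ[k] levelMod k rk j :=
  LinearMap.pi fun F' =>
    ∑ F : {F : P // rk F = j + 1}, (step k j F.1 F'.1).comp (LinearMap.proj F)

/-- The `j`-th term of the complex `Z(P)`: `⊕_{rk F = j} Z_{j-2}(Δ(F))` (for `j = 0`,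
all of `k`). -/
def cyclesSub (j : ℕ) : Submodule k (levelMod k rk j) :=
  Submodule.pi Set.univ fun F => cycles k (j - 1) F.1

/-- Chains of the truncated order complex `Δ(P_(j))`: strictly decreasing chains
`1̂ > F_0 > ⋯ > F_{m-1} > 0̂` in which every entry has rank `< j`. -/
def DChainR (P : Type*) [PartialOrder P] [BoundedOrder P] (rk : P → ℕ) (m j : ℕ) : Type _ :=
  {f : Fin m → P // StrictAnti f ∧ ∀ t, ⊥ < f t ∧ f t < ⊤ ∧ rk (f t) < j}

/-- The space of `(m-1)`-dimensional chains of `Δ(P_(j))`. -/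
abbrev CCR (m j : ℕ) : Type _ := DChainR P rk m j →₀ k

/-- Deletion of the `t`-th entry of a chain of `Δ(P_(j))`. -/
def delChainR {m j : ℕ} (c : DChainR P rk (m + 1) j) (t : Fin (m + 1)) : DChainR P rk m j :=
  ⟨c.1 ∘ t.succAbove, c.2.1.comp_strictMono (Fin.strictMono_succAbove t),
    fun u => c.2.2 (t.succAbove u)⟩

/-- The (augmented) boundary map of `Δ(P_(j))`. -/
def bdryR (m j : ℕ) : CCR k rk (m + 1) j →ₗ[k] CCR k rk m j :=
  Finsupp.lsum k fun c => LinearMap.toSpanSingleton k _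
    (∑ t : Fin (m + 1), ((-1 : k) ^ (t : ℕ)) • Finsupp.single (delChainR rk c t) (1 : k))

set_option maxHeartbeats 2000000
/-! ### Auxiliary machinery for the proof -/

theorem ZP_bot_lt {F : P} (hbot : rk ⊥ = 0) (hF : 0 < rk F) : ⊥ < F := by
  rcases eq_or_lt_of_le (bot_le (a := F)) with h | h
  · rw [← h, hbot] at hF; omega
  · exact h

theorem ZP_lt_top {F : P} {r : ℕ} (htop : rk ⊤ = r) (hF : rk F < r) : F < ⊤ := by
  rcases eq_or_lt_of_le (le_top (a := F)) with h | h
  · rw [h, htop] at hF; omega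
  · exact h

theorem ZP_exists_covby {a b : P} (h : a < b) : ∃ c, a ≤ c ∧ c ⋖ b := by
  have hne : (Finset.univ.filter fun x : P => a ≤ x ∧ x < b).Nonempty :=
    ⟨a, by simp [h]⟩
  obtain ⟨c, hc, hmax'⟩ := Finset.exists_maximal hne
  have hmax : ∀ x ∈ (Finset.univ.filter fun x : P => a ≤ x ∧ x < b), ¬ c < x :=
    fun x hx hcx => lt_irrefl c (lt_of_lt_of_le hcx (hmax' hx hcx.le))
  simp only [Finset.mem_filter, Finset.mem_univ, true_and] at hc
  refine ⟨c, hc.1, hc.2, fun x hcx hxb => ?_⟩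
  have hx : x ∈ Finset.univ.filter fun x : P => a ≤ x ∧ x < b := by
    simp only [Finset.mem_filter, Finset.mem_univ, true_and]
    exact ⟨hc.1.trans hcx.le, hxb⟩
  exact hmax x hx hcx

theorem ZP_rk_strictMono (hcov : ∀ a b : P, a ⋖ b → rk b = rk a + 1) :
    ∀ a b : P, a < b → rk a < rk b := by
  suffices h : ∀ b a : P, a < b → rk a < rk b from fun a b => h b a
  intro b
  induction b using WellFoundedLT.induction with
  | _ b ih =>
    intro a hab
    obtain ⟨c, hac, hcb⟩ := ZP_exists_covby hab
    have h1 := hcov c b hcb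
    rcases eq_or_lt_of_le hac with rfl | h2
    · omega
    · have := ih c hcb.1 a h2; omega

theorem ZP_top_of_rk {F : P} {r : ℕ} (hmono : ∀ a b : P, a < b → rk a < rk b)
    (htop : rk ⊤ = r) (hF : rk F = r) : F = ⊤ := by
  rcases eq_or_lt_of_le (le_top (a := F)) with h | h
  · exact h
  · have := hmono _ _ h; omega

theorem ZP_strictAnti_le {m : ℕ} {g : Fin m → ℕ} (hg : StrictAnti g) :
    ∀ s t : Fin m, s ≤ t → g t + (t : ℕ) ≤ g s + (s : ℕ) := by
  have key : ∀ (d : ℕ) (s t : Fin m), (t : ℕ) = (s : ℕ) + d →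
      g t + (t : ℕ) ≤ g s + (s : ℕ) := by
    intro d
    induction d with
    | zero =>
      intro s t h
      have : s = t := Fin.ext (by omega)
      rw [this]
    | succ n ih =>
      intro s t h
      have hb : (s : ℕ) + n < m := by have := t.isLt; omega
      have iht := ih s ⟨(s : ℕ) + n, hb⟩ rfl
      have hv : ((⟨(s : ℕ) + n, hb⟩ : Fin m) : ℕ) = (s : ℕ) + n := rfl
      have hlt : g t < g ⟨(s : ℕ) + n, hb⟩ := hg (by rw [Fin.lt_def, hv]; omega)
      omega
  intro s t hst
  exact key ((t : ℕ) - (s : ℕ)) s t (by have := Fin.le_def.mp hst; omega)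

theorem ZP_saturated {m : ℕ} {f : Fin m → P}
    (hmono : ∀ a b : P, a < b → rk a < rk b) (hbot : rk ⊥ = 0)
    (hanti : StrictAnti f) (hpos : ∀ t, ⊥ < f t) (hbd : ∀ t, rk (f t) ≤ m) (t : Fin m) :
    rk (f t) = m - (t : ℕ) := by
  have hm : 0 < m := t.pos
  have hg : StrictAnti (fun u => rk (f u)) := fun a b hab => hmono _ _ (hanti hab)
  have ht := t.isLt
  have hub := ZP_strictAnti_le hg ⟨0, hm⟩ t (by rw [Fin.le_def]; exact Nat.zero_le _)
  have hv0 : ((⟨0, hm⟩ : Fin m) : ℕ) = 0 := rfl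
  have hm1 : m - 1 < m := by omega
  have hlb := ZP_strictAnti_le hg t ⟨m - 1, hm1⟩ (by rw [Fin.le_def]; exact Nat.le_pred_of_lt ht)
  have hv1 : ((⟨m - 1, hm1⟩ : Fin m) : ℕ) = m - 1 := rfl
  have hpos' : 0 < rk (f ⟨m - 1, hm1⟩) := by
    have := hmono _ _ (hpos ⟨m - 1, hm1⟩); omega
  have hub0 : rk (f ⟨0, hm⟩) ≤ m := hbd _
  simp only [hv0, hv1] at hub hlb
  omega

theorem ZP_strictAnti_cons {m : ℕ} {F : P} {f : Fin m → P} (hf : StrictAnti f)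
    (hF : ∀ t, f t < F) : StrictAnti (Fin.cons F f : Fin (m + 1) → P) := by
  intro s t hst
  rcases Fin.eq_zero_or_eq_succ t with rfl | ⟨t', rfl⟩
  · exact absurd hst (Fin.not_lt_zero s)
  · rcases Fin.eq_zero_or_eq_succ s with rfl | ⟨s', rfl⟩
    · rw [Fin.cons_succ, Fin.cons_zero]; exact hF t'
    · rw [Fin.cons_succ, Fin.cons_succ]; exact hf (by rwa [Fin.succ_lt_succ_iff] at hst)

/-- Prepending `F` to a chain of `Δ(F)`, viewed in `Δ(P_(N))`. -/
def ZPcons {m N : ℕ} {F : P} (hmono : ∀ a b : P, a < b → rk a < rk b)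
    (hb : ⊥ < F) (ht : F < ⊤) (hN : rk F < N) (c : DChain P m F) : DChainR P rk (m + 1) N :=
  ⟨Fin.cons F c.1, ZP_strictAnti_cons (fun _ _ h => c.2.1 h) (fun t => (c.2.2 t).2), by
    intro t
    rcases Fin.eq_zero_or_eq_succ t with rfl | ⟨t', rfl⟩
    · rw [Fin.cons_zero]; exact ⟨hb, ht, hN⟩
    · rw [Fin.cons_succ]
      exact ⟨(c.2.2 t').1, lt_trans (c.2.2 t').2 ht, lt_trans (hmono _ _ (c.2.2 t').2) hN⟩⟩

/-- A chain of `Δ(F)` viewed in `Δ(P_(N))`. -/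
def ZPiota {m N : ℕ} {F : P} (hmono : ∀ a b : P, a < b → rk a < rk b)
    (hN : rk F ≤ N) (c : DChain P m F) : DChainR P rk m N :=
  ⟨c.1, c.2.1, fun t => ⟨(c.2.2 t).1, lt_of_lt_of_le (c.2.2 t).2 le_top,
    lt_of_lt_of_le (hmono _ _ (c.2.2 t).2) hN⟩⟩

/-- A chain of `Δ(P_(N))` viewed in `Δ(G)` for `G ≥ ⊤`. -/
def ZPtoUnder {m N : ℕ} (G : P) (hG : ⊤ ≤ G) (d : DChainR P rk m N) : DChain P m G :=
  ⟨d.1, d.2.1, fun t => ⟨(d.2.2 t).1, lt_of_lt_of_le (d.2.2 t).2.1 hG⟩⟩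

/-- Prepending `F` to a chain of `Δ(F)`, viewed in `Δ(G)` for `F < G`. -/
def ZPconsD {m : ℕ} {F G : P} (hb : ⊥ < F) (hFG : F < G) (c : DChain P m F) :
    DChain P (m + 1) G :=
  ⟨Fin.cons F c.1, ZP_strictAnti_cons (fun _ _ h => c.2.1 h) (fun t => (c.2.2 t).2), by
    intro t
    rcases Fin.eq_zero_or_eq_succ t with rfl | ⟨t', rfl⟩
    · rw [Fin.cons_zero]; exact ⟨hb, hFG⟩
    · rw [Fin.cons_succ]; exact ⟨(c.2.2 t').1, lt_trans (c.2.2 t').2 hFG⟩⟩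

/-- The tail of a chain of `Δ(F)` whose head is `F'`. -/
def ZPtail {m : ℕ} {F F' : P} (c : DChain P (m + 1) F) (h : c.1 0 = F') : DChain P m F' :=
  ⟨fun t => c.1 t.succ, c.2.1.comp_strictMono (Fin.strictMono_succ),
    fun t => ⟨(c.2.2 t.succ).1, lt_of_lt_of_eq (c.2.1 (Fin.succ_pos t)) h⟩⟩

/-- The tail of a chain of `Δ(P_(N))` whose head is `F'`. -/
def ZPtailR {m N : ℕ} {F' : P} (d : DChainR P rk (m + 1) N) (h : d.1 0 = F') :
    DChain P m F' :=
  ⟨fun t => d.1 t.succ, d.2.1.comp_strictMono (Fin.strictMono_succ),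
    fun t => ⟨(d.2.2 t.succ).1, lt_of_lt_of_eq (d.2.1 (Fin.succ_pos t)) h⟩⟩

def ZPempty (F : P) : DChain P 0 F := ⟨Fin.elim0, fun a => a.elim0, fun t => t.elim0⟩

def ZPemptyR (N : ℕ) : DChainR P rk 0 N := ⟨Fin.elim0, fun a => a.elim0, fun t => t.elim0⟩

instance ZPuniqueDChain {F : P} : Unique (DChain P 0 F) where
  default := ZPempty F
  uniq c := Subtype.ext (funext fun t => t.elim0)

instance ZPuniqueDChainR {N : ℕ} : Unique (DChainR P rk 0 N) where
  default := ZPemptyR rk N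
  uniq c := Subtype.ext (funext fun t => t.elim0)

theorem ZP_lhom_ext1 {M : Type*} [AddCommMonoid M] [Module k M] {α : Type*}
    {φ ψ : (α →₀ k) →ₗ[k] M} (h : ∀ a, φ (Finsupp.single a 1) = ψ (Finsupp.single a 1)) :
    φ = ψ := by
  apply Finsupp.lhom_ext
  intro a b
  have hb : (Finsupp.single a b) = b • Finsupp.single a (1 : k) := by
    rw [Finsupp.smul_single', mul_one]
  rw [hb, map_smul, map_smul, h]

theorem ZP_sum_single {M : Type*} [AddCommMonoid M] {j : ℕ} {G₀ : P} (h₀ : rk G₀ = j)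
    (f : {F : P // rk F = j} → M) (h : ∀ F : {F : P // rk F = j}, F.1 ≠ G₀ → f F = 0) :
    ∑ F : {F : P // rk F = j}, f F = f ⟨G₀, h₀⟩ :=
  Fintype.sum_eq_single _ (fun b hb => h b (fun hh => hb (Subtype.ext hh)))

theorem ZP_bdry_single {m : ℕ} {F : P} (c : DChain P (m + 1) F) :
    bdry k m F (Finsupp.single c 1) =
      ∑ j : Fin (m + 1), ((-1 : k) ^ (j : ℕ)) • Finsupp.single (delChain c j) (1 : k) := by
  rw [bdry, Finsupp.lsum_single, LinearMap.toSpanSingleton_apply, one_smul]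

theorem ZP_bdryR_single {m N : ℕ} (d : DChainR P rk (m + 1) N) :
    bdryR k rk m N (Finsupp.single d 1) =
      ∑ t : Fin (m + 1), ((-1 : k) ^ (t : ℕ)) • Finsupp.single (delChainR rk d t) (1 : k) := by
  rw [bdryR, Finsupp.lsum_single, LinearMap.toSpanSingleton_apply, one_smul]

theorem ZP_relabel_single {F F' : P} (c : DChain P 0 F) :
    relabel k F F' (Finsupp.single c 1) = Finsupp.single (ZPempty F') 1 := by
  rw [relabel, Finsupp.lsum_single, LinearMap.toSpanSingleton_apply, one_smul]
  rfl

theorem ZP_phiMap_single_eq {m : ℕ} {F F' : P} (c : DChain P (m + 1) F) (h : c.1 0 = F') :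
    phiMap k m F F' (Finsupp.single c 1) = Finsupp.single (ZPtail c h) 1 := by
  rw [phiMap, Finsupp.lsum_single, LinearMap.toSpanSingleton_apply, one_smul, dif_pos h]
  rfl

theorem ZP_phiMap_single_ne {m : ℕ} {F F' : P} (c : DChain P (m + 1) F) (h : ¬(c.1 0 = F')) :
    phiMap k m F F' (Finsupp.single c 1) = 0 := by
  rw [phiMap, Finsupp.lsum_single, LinearMap.toSpanSingleton_apply, one_smul, dif_neg h]

/-- Extraction of the chains with head `F`, dropping the head. -/
def extractR (m N : ℕ) (F : P) : CCR k rk (m + 1) N →ₗ[k] CC k m F :=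
  Finsupp.lsum k fun d => LinearMap.toSpanSingleton k _
    (if h : d.1 0 = F then Finsupp.single (ZPtailR rk d h) (1 : k) else 0)

theorem ZP_extractR_single_eq {m N : ℕ} {F : P} (d : DChainR P rk (m + 1) N)
    (h : d.1 0 = F) :
    extractR k rk m N F (Finsupp.single d 1) = Finsupp.single (ZPtailR rk d h) 1 := by
  rw [extractR, Finsupp.lsum_single, LinearMap.toSpanSingleton_apply, one_smul, dif_pos h]

theorem ZP_extractR_single_ne {m N : ℕ} {F : P} (d : DChainR P rk (m + 1) N)
    (h : ¬(d.1 0 = F)) :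
    extractR k rk m N F (Finsupp.single d 1) = 0 := by
  rw [extractR, Finsupp.lsum_single, LinearMap.toSpanSingleton_apply, one_smul, dif_neg h]

theorem ZP_delChainR_cons_zero {m N : ℕ} {F : P}
    (hmono : ∀ a b : P, a < b → rk a < rk b) (hb : ⊥ < F) (ht : F < ⊤) (hN : rk F < N)
    (c : DChain P m F) :
    delChainR rk (ZPcons rk hmono hb ht hN c) 0 = ZPiota rk hmono (le_of_lt hN) c := by
  apply Subtype.ext
  funext u
  exact (congrArg (Fin.cons (α := fun _ => P) F c.1) (Fin.zero_succAbove u)).trans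
    (Fin.cons_succ (α := fun _ => P) F c.1 u)

theorem ZP_delChainR_cons_succ {m N : ℕ} {F : P}
    (hmono : ∀ a b : P, a < b → rk a < rk b) (hb : ⊥ < F) (ht : F < ⊤) (hN : rk F < N)
    (c : DChain P (m + 1) F) (t : Fin (m + 1)) :
    delChainR rk (ZPcons rk hmono hb ht hN c) t.succ = ZPcons rk hmono hb ht hN (delChain c t) := by
  apply Subtype.ext
  funext u
  rcases Fin.eq_zero_or_eq_succ u with rfl | ⟨u', rfl⟩
  · exact (congrArg (Fin.cons (α := fun _ => P) F c.1) (Fin.succ_succAbove_zero t)).trans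
      ((Fin.cons_zero (α := fun _ => P) F c.1).trans
        (Fin.cons_zero (α := fun _ => P) F (c.1 ∘ t.succAbove)).symm)
  · exact (congrArg (Fin.cons (α := fun _ => P) F c.1) (Fin.succ_succAbove_succ t u')).trans
      ((Fin.cons_succ (α := fun _ => P) F c.1 (t.succAbove u')).trans
        (Fin.cons_succ (α := fun _ => P) F (c.1 ∘ t.succAbove) u').symm)

theorem ZP_bdryR_cons_zero {N : ℕ} {F : P}
    (hmono : ∀ a b : P, a < b → rk a < rk b) (hb : ⊥ < F) (ht : F < ⊤) (hN : rk F < N) :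
    (bdryR k rk 0 N).comp
        (Finsupp.lmapDomain k k (ZPcons rk hmono hb ht hN : DChain P 0 F → DChainR P rk 1 N))
      = Finsupp.lmapDomain k k (ZPiota rk hmono (le_of_lt hN) : DChain P 0 F → DChainR P rk 0 N) := by
  apply ZP_lhom_ext1 k
  intro c
  rw [LinearMap.comp_apply, Finsupp.lmapDomain_apply, Finsupp.mapDomain_single,
    Finsupp.lmapDomain_apply, Finsupp.mapDomain_single, ZP_bdryR_single k rk _]
  simp only [Fin.sum_univ_succ, Fin.sum_univ_zero, Fin.val_zero, pow_zero, one_smul, add_zero]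
  rw [ZP_delChainR_cons_zero]

theorem ZP_bdryR_cons_succ {m N : ℕ} {F : P}
    (hmono : ∀ a b : P, a < b → rk a < rk b) (hb : ⊥ < F) (ht : F < ⊤) (hN : rk F < N) :
    (bdryR k rk (m + 1) N).comp
        (Finsupp.lmapDomain k k (ZPcons rk hmono hb ht hN : DChain P (m + 1) F → DChainR P rk (m + 2) N))
      = Finsupp.lmapDomain k k (ZPiota rk hmono (le_of_lt hN) : DChain P (m + 1) F → DChainR P rk (m + 1) N)
        - (Finsupp.lmapDomain k k (ZPcons rk hmono hb ht hN : DChain P m F → DChainR P rk (m + 1) N)).comp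
            (bdry k m F) := by
  apply ZP_lhom_ext1 k
  intro c
  simp only [LinearMap.sub_apply, LinearMap.comp_apply, Finsupp.lmapDomain_apply,
    Finsupp.mapDomain_single, ZP_bdry_single k _, map_sum, map_smul, Finsupp.mapDomain_single,
    ZP_bdryR_single k rk _]
  rw [Fin.sum_univ_succ]
  simp only [Fin.val_zero, pow_zero, one_smul, ZP_delChainR_cons_zero,
    ZP_delChainR_cons_succ, Fin.val_succ, pow_succ, mul_neg_one, neg_smul]
  rw [sub_eq_add_neg, ← Finset.sum_neg_distrib]
theorem ZP_iota_eq_sum_cons {m N r : ℕ} {F : P}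
    (hmono : ∀ a b : P, a < b → rk a < rk b) (hbot : rk ⊥ = 0) (htop : rk ⊤ = r)
    (hF : rk F ≤ m + 2) (hFN : rk F ≤ N) (hr : m + 1 < r) (hN : m + 1 < N) :
    Finsupp.lmapDomain k k (ZPiota rk hmono hFN : DChain P (m + 1) F → DChainR P rk (m + 1) N)
      = ∑ F' : {F' : P // rk F' = m + 1},
        (Finsupp.lmapDomain k k (ZPcons rk hmono
            (ZP_bot_lt rk hbot (by rw [F'.2]; omega))
            (ZP_lt_top rk htop (by rw [F'.2]; omega))
            (by rw [F'.2]; omega) : DChain P m F'.1 → DChainR P rk (m + 1) N)).comp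
          (phiMap k m F F'.1) := by
  apply ZP_lhom_ext1 k
  intro c
  have hsat : rk (c.1 0) = m + 1 := by
    have h := ZP_saturated rk hmono hbot c.2.1 (fun t => (c.2.2 t).1)
      (fun t => by have h2 := hmono _ _ (c.2.2 t).2; omega) 0
    simpa using h
  rw [LinearMap.sum_apply,
    Fintype.sum_eq_single (⟨c.1 0, hsat⟩ : {F' : P // rk F' = m + 1})
      (fun b hb => by
        rw [LinearMap.comp_apply, ZP_phiMap_single_ne k c (fun e => hb (Subtype.ext e.symm)),
          map_zero]),
    LinearMap.comp_apply, ZP_phiMap_single_eq k c rfl,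
    Finsupp.lmapDomain_apply, Finsupp.mapDomain_single,
    Finsupp.lmapDomain_apply, Finsupp.mapDomain_single]
  exact congrArg (fun z => Finsupp.single z (1 : k)) (Subtype.ext (Fin.cons_self_tail c.1).symm)

theorem ZP_iota0 {N : ℕ} {F : P}
    (hmono : ∀ a b : P, a < b → rk a < rk b) (hFN : rk F ≤ N) :
    Finsupp.lmapDomain k k (ZPiota rk hmono hFN : DChain P 0 F → DChainR P rk 0 N)
      = (Finsupp.lmapDomain k k (fun _ : DChain P 0 (⊥ : P) => ZPemptyR rk N)).comp
          (relabel k F ⊥) := by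
  apply ZP_lhom_ext1 k
  intro c
  rw [LinearMap.comp_apply, ZP_relabel_single k _, Finsupp.lmapDomain_apply, Finsupp.mapDomain_single,
    Finsupp.lmapDomain_apply, Finsupp.mapDomain_single]
  exact congrArg (fun z => Finsupp.single z (1 : k)) (Subtype.ext (funext fun t => t.elim0))

theorem ZP_decompR {j r : ℕ}
    (hmono : ∀ a b : P, a < b → rk a < rk b) (hbot : rk ⊥ = 0) (htop : rk ⊤ = r)
    (hr : j + 2 < r) :
    (LinearMap.id : CCR k rk (j + 2) (j + 3) →ₗ[k] CCR k rk (j + 2) (j + 3))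
      = ∑ G : {G : P // rk G = j + 2},
        (Finsupp.lmapDomain k k (ZPcons rk hmono
            (ZP_bot_lt rk hbot (by rw [G.2]; omega))
            (ZP_lt_top rk htop (by rw [G.2]; omega))
            (by rw [G.2]; omega) : DChain P (j + 1) G.1 → DChainR P rk (j + 2) (j + 3))).comp
          (extractR k rk (j + 1) (j + 3) G.1) := by
  apply ZP_lhom_ext1 k
  intro d
  have hsat : rk (d.1 0) = j + 2 := by
    have h := ZP_saturated rk hmono hbot d.2.1 (fun t => (d.2.2 t).1)
      (fun t => by have := (d.2.2 t).2.2; omega) 0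
    simpa using h
  rw [LinearMap.id_apply, LinearMap.sum_apply,
    Fintype.sum_eq_single (⟨d.1 0, hsat⟩ : {G : P // rk G = j + 2})
      (fun b hb => by
        rw [LinearMap.comp_apply, ZP_extractR_single_ne k rk d (fun e => hb (Subtype.ext e.symm)),
          map_zero]),
    LinearMap.comp_apply, ZP_extractR_single_eq k rk d rfl,
    Finsupp.lmapDomain_apply, Finsupp.mapDomain_single]
  exact congrArg (fun z => Finsupp.single z (1 : k)) (Subtype.ext (Fin.cons_self_tail d.1).symm)

theorem ZP_extractR_iota {m N : ℕ} {G F' : P}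
    (hmono : ∀ a b : P, a < b → rk a < rk b) (hGN : rk G ≤ N) :
    (extractR k rk m N F').comp
        (Finsupp.lmapDomain k k (ZPiota rk hmono hGN : DChain P (m + 1) G → DChainR P rk (m + 1) N))
      = phiMap k m G F' := by
  apply ZP_lhom_ext1 k
  intro c
  rw [LinearMap.comp_apply, Finsupp.lmapDomain_apply, Finsupp.mapDomain_single]
  by_cases h : c.1 0 = F'
  · rw [ZP_extractR_single_eq k rk _ h, ZP_phiMap_single_eq k c h]
    rfl
  · rw [ZP_extractR_single_ne k rk _ h, ZP_phiMap_single_ne k c h]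

theorem ZP_extractR_cons_ne {m N : ℕ} {F F' : P}
    (hmono : ∀ a b : P, a < b → rk a < rk b) (hb : ⊥ < F) (ht : F < ⊤) (hN : rk F < N)
    (hne : F ≠ F') :
    (extractR k rk m N F').comp
        (Finsupp.lmapDomain k k (ZPcons rk hmono hb ht hN : DChain P m F → DChainR P rk (m + 1) N))
      = 0 := by
  apply ZP_lhom_ext1 k
  intro c
  rw [LinearMap.comp_apply, Finsupp.lmapDomain_apply, Finsupp.mapDomain_single,
    ZP_extractR_single_ne k rk _ (fun e => hne e),
    LinearMap.zero_apply]

theorem ZP_extractR_cons_eq {m N : ℕ} {F : P}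
    (hmono : ∀ a b : P, a < b → rk a < rk b) (hb : ⊥ < F) (ht : F < ⊤) (hN : rk F < N) :
    (extractR k rk m N F).comp
        (Finsupp.lmapDomain k k (ZPcons rk hmono hb ht hN : DChain P m F → DChainR P rk (m + 1) N))
      = LinearMap.id := by
  apply ZP_lhom_ext1 k
  intro c
  have hh : (ZPcons rk hmono hb ht hN c).1 0 = F := rfl
  rw [LinearMap.comp_apply, Finsupp.lmapDomain_apply, Finsupp.mapDomain_single,
    ZP_extractR_single_eq k rk _ hh, LinearMap.id_apply]
  exact congrArg (fun z => Finsupp.single z (1 : k))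
    (Subtype.ext (funext fun t => Fin.cons_succ (α := fun _ => P) F c.1 t))

theorem ZP_phiMap_zero {m : ℕ} {G F' : P}
    (hmono : ∀ a b : P, a < b → rk a < rk b) (h : rk G ≤ rk F') :
    phiMap k m G F' = 0 := by
  apply ZP_lhom_ext1 k
  intro c
  rw [ZP_phiMap_single_ne k c
    (fun e => by have h2 := hmono _ _ (c.2.2 0).2; rw [e] at h2; omega),
    LinearMap.zero_apply]

theorem ZP_bdry_toUnder {m N : ℕ} {G : P} (hG : ⊤ ≤ G) :
    (bdry k m G).comp
        (Finsupp.lmapDomain k k (ZPtoUnder rk G hG : DChainR P rk (m + 1) N → DChain P (m + 1) G))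
      = (Finsupp.lmapDomain k k (ZPtoUnder rk G hG : DChainR P rk m N → DChain P m G)).comp
          (bdryR k rk m N) := by
  apply ZP_lhom_ext1 k
  intro d
  rw [LinearMap.comp_apply, LinearMap.comp_apply, Finsupp.lmapDomain_apply,
    Finsupp.mapDomain_single, ZP_bdry_single k _, ZP_bdryR_single k rk _, map_sum]
  refine Finset.sum_congr rfl fun t _ => ?_
  rw [map_smul, Finsupp.lmapDomain_apply, Finsupp.mapDomain_single]
  rfl

theorem ZP_phiMap_toUnder {m N : ℕ} {G F' : P} (hG : ⊤ ≤ G) :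
    (phiMap k m G F').comp
        (Finsupp.lmapDomain k k (ZPtoUnder rk G hG : DChainR P rk (m + 1) N → DChain P (m + 1) G))
      = extractR k rk m N F' := by
  apply ZP_lhom_ext1 k
  intro d
  rw [LinearMap.comp_apply, Finsupp.lmapDomain_apply, Finsupp.mapDomain_single]
  by_cases h : d.1 0 = F'
  · rw [ZP_phiMap_single_eq k _ h, ZP_extractR_single_eq k rk d h]
    rfl
  · rw [ZP_phiMap_single_ne k _ h, ZP_extractR_single_ne k rk d h]

theorem ZP_decompTop {m : ℕ} {G : P}
    (hmono : ∀ a b : P, a < b → rk a < rk b) (hbot : rk ⊥ = 0)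
    (hG : ⊤ ≤ G) (hGr : rk G = m + 2) :
    (LinearMap.id : CC k (m + 1) G →ₗ[k] CC k (m + 1) G)
      = ∑ F' : {F' : P // rk F' = m + 1},
        (Finsupp.lmapDomain k k (ZPconsD
            (ZP_bot_lt rk hbot (by rw [F'.2]; omega))
            (lt_of_le_of_ne (le_trans le_top hG)
              (fun e => by have h2 := F'.2; rw [e, hGr] at h2; omega)
              : F'.1 < G) : DChain P m F'.1 → DChain P (m + 1) G)).comp
          (phiMap k m G F'.1) := by
  apply ZP_lhom_ext1 k
  intro c
  have hsat : rk (c.1 0) = m + 1 := by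
    have h := ZP_saturated rk hmono hbot c.2.1 (fun t => (c.2.2 t).1)
      (fun t => by have h2 := hmono _ _ (c.2.2 t).2; rw [hGr] at h2; omega) 0
    simpa using h
  rw [LinearMap.id_apply, LinearMap.sum_apply,
    Fintype.sum_eq_single (⟨c.1 0, hsat⟩ : {F' : P // rk F' = m + 1})
      (fun b hb => by
        rw [LinearMap.comp_apply, ZP_phiMap_single_ne k c (fun e => hb (Subtype.ext e.symm)),
          map_zero]),
    LinearMap.comp_apply, ZP_phiMap_single_eq k c rfl,
    Finsupp.lmapDomain_apply, Finsupp.mapDomain_single]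
  exact congrArg (fun z => Finsupp.single z (1 : k)) (Subtype.ext (Fin.cons_self_tail c.1).symm)

theorem ZP_dmap_apply (jj : ℕ) (v : levelMod k rk (jj + 1)) (F' : {F : P // rk F = jj}) :
    dmap k rk jj v F' = ∑ F : {F : P // rk F = jj + 1}, (step k jj F.1 F'.1) (v F) := by
  simp only [dmap, LinearMap.pi_apply, LinearMap.coe_sum, Finset.sum_apply,
    LinearMap.coe_comp, Function.comp_apply, LinearMap.proj_apply]

theorem ZP_bdryZ_zero {j r : ℕ}
    (hmono : ∀ a b : P, a < b → rk a < rk b) (hbot : rk ⊥ = 0) (htop : rk ⊤ = r)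
    (hjr : j + 1 < r)
    (x : levelMod k rk (j + 1)) (hx : x ∈ cyclesSub k rk (j + 1))
    (hdx' : ∀ F' : {F : P // rk F = j},
      (∑ F : {F : P // rk F = j + 1}, (step k j F.1 F'.1) (x F)) = 0)
    (hb1 : ∀ F : {F : P // rk F = j + 1}, ⊥ < F.1)
    (ht1 : ∀ F : {F : P // rk F = j + 1}, F.1 < ⊤)
    (hN1 : ∀ F : {F : P // rk F = j + 1}, rk F.1 < j + 3) :
    bdryR k rk j (j + 3)
      (∑ F : {F : P // rk F = j + 1},
        Finsupp.lmapDomain k k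
          (ZPcons rk hmono (hb1 F) (ht1 F) (hN1 F) :
            DChain P j F.1 → DChainR P rk (j + 1) (j + 3))
          (x F)) = 0 := by
  rw [map_sum]
  cases j with
  | zero =>
    have hstep : ∀ F : {F : P // rk F = 0 + 1},
        bdryR k rk 0 (0 + 3)
          (Finsupp.lmapDomain k k
            (ZPcons rk hmono (hb1 F) (ht1 F) (hN1 F) :
              DChain P 0 F.1 → DChainR P rk (0 + 1) (0 + 3))
            (x F))
        = Finsupp.lmapDomain k k (fun _ : DChain P 0 (⊥ : P) => ZPemptyR rk (0 + 3))
            (relabel k F.1 ⊥ (x F)) := by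
      intro F
      have h1 := LinearMap.congr_fun
        (ZP_bdryR_cons_zero k rk hmono (hb1 F) (ht1 F) (hN1 F)) (x F)
      have h2 := LinearMap.congr_fun
        (ZP_iota0 k rk hmono (le_of_lt (hN1 F))) (x F)
      exact h1.trans h2
    rw [Finset.sum_congr rfl (fun F _ => hstep F), ← map_sum]
    have hz : (∑ F : {F : P // rk F = 0 + 1}, relabel k F.1 ⊥ (x F)) = 0 := by
      have h := hdx' ⟨⊥, hbot⟩
      simpa [step] using h
    rw [hz, map_zero]
  | succ m =>
    have hxF : ∀ F : {F : P // rk F = m + 1 + 1}, bdry k m F.1 (x F) = 0 := by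
      intro F
      have h := Submodule.mem_pi.mp hx F (Set.mem_univ F)
      have h2 : x F ∈ cycles k (m + 1) F.1 := h
      simp only [cycles] at h2
      exact LinearMap.mem_ker.mp h2
    have hstep : ∀ F : {F : P // rk F = m + 1 + 1},
        bdryR k rk (m + 1) (m + 1 + 3)
          (Finsupp.lmapDomain k k
            (ZPcons rk hmono (hb1 F) (ht1 F) (hN1 F) :
              DChain P (m + 1) F.1 → DChainR P rk (m + 1 + 1) (m + 1 + 3))
            (x F))
        = ∑ F' : {F' : P // rk F' = m + 1},
            Finsupp.lmapDomain k k (ZPcons rk hmono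
              (ZP_bot_lt rk hbot (by rw [F'.2]; omega))
              (ZP_lt_top rk htop (by rw [F'.2]; omega))
              (by rw [F'.2]; omega) : DChain P m F'.1 → DChainR P rk (m + 1) (m + 1 + 3))
              (phiMap k m F.1 F'.1 (x F)) := by
      intro F
      have h1 := LinearMap.congr_fun
        (ZP_bdryR_cons_succ k rk (N := m + 1 + 3) hmono (hb1 F) (ht1 F) (hN1 F)) (x F)
      have h2 := LinearMap.congr_fun
        (ZP_iota_eq_sum_cons k rk (N := m + 1 + 3) hmono hbot htop
          (by rw [F.2] : rk F.1 ≤ m + 2) (le_of_lt (hN1 F))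
          (by omega : m + 1 < r) (by omega : m + 1 < m + 1 + 3)) (x F)
      calc bdryR k rk (m + 1) (m + 1 + 3)
            (Finsupp.lmapDomain k k
              (ZPcons rk hmono (hb1 F) (ht1 F) (hN1 F) :
                DChain P (m + 1) F.1 → DChainR P rk (m + 1 + 1) (m + 1 + 3))
              (x F))
          = Finsupp.lmapDomain k k
              (ZPiota rk hmono (le_of_lt (hN1 F)) :
                DChain P (m + 1) F.1 → DChainR P rk (m + 1) (m + 1 + 3)) (x F)
            - Finsupp.lmapDomain k k
                (ZPcons rk hmono (hb1 F) (ht1 F) (hN1 F) :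
                  DChain P m F.1 → DChainR P rk (m + 1) (m + 1 + 3))
                (bdry k m F.1 (x F)) := h1
        _ = Finsupp.lmapDomain k k
              (ZPiota rk hmono (le_of_lt (hN1 F)) :
                DChain P (m + 1) F.1 → DChainR P rk (m + 1) (m + 1 + 3)) (x F) := by
            rw [hxF F, map_zero, sub_zero]
        _ = _ := by
            rw [h2, LinearMap.sum_apply]
            exact Finset.sum_congr rfl fun F' _ => rfl
    rw [Finset.sum_congr rfl (fun F _ => hstep F), Finset.sum_comm]
    refine Finset.sum_eq_zero fun F' _ => ?_
    have hz : (∑ F : {F : P // rk F = m + 1 + 1}, phiMap k m F.1 F'.1 (x F)) = 0 := by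
      have h := hdx' F'
      simpa [step] using h
    calc ∑ F : {F : P // rk F = m + 1 + 1},
          Finsupp.lmapDomain k k (ZPcons rk hmono
            (ZP_bot_lt rk hbot (by rw [F'.2]; omega))
            (ZP_lt_top rk htop (by rw [F'.2]; omega))
            (by rw [F'.2]; omega) : DChain P m F'.1 → DChainR P rk (m + 1) (m + 1 + 3))
            (phiMap k m F.1 F'.1 (x F))
        = Finsupp.lmapDomain k k (ZPcons rk hmono
            (ZP_bot_lt rk hbot (by rw [F'.2]; omega))
            (ZP_lt_top rk htop (by rw [F'.2]; omega))
            (by rw [F'.2]; omega) : DChain P m F'.1 → DChainR P rk (m + 1) (m + 1 + 3))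
            (∑ F : {F : P // rk F = m + 1 + 1}, phiMap k m F.1 F'.1 (x F)) :=
          (map_sum (Finsupp.lmapDomain k k (ZPcons rk hmono
            (ZP_bot_lt rk hbot (by rw [F'.2]; omega))
            (ZP_lt_top rk htop (by rw [F'.2]; omega))
            (by rw [F'.2]; omega) : DChain P m F'.1 → DChainR P rk (m + 1) (m + 1 + 3)))
            (fun F : {F : P // rk F = m + 1 + 1} => phiMap k m F.1 F'.1 (x F))
            Finset.univ).symm
      _ = 0 := by rw [hz, map_zero]

/-- let `P` be a finite graded poset of rank `r` with `0̂` and `1̂`.  If the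
reduced homology `H̃_i(Δ(P_(i+3)))` vanishes for all `0 ≤ i ≤ r−3`, then the complex `Z(P)`,
`0 → Z_{r-2}(Δ(1̂)) → ⊕_{rk F = r-1} Z_{r-3}(Δ(F)) → ⋯ → ⊕_{rk F = 1} Z_{-1}(Δ(F)) → k`,
is exact: its leftmost map is injective and kernels equal images at all intermediate spots. -/
theorem complexZ_exact (r : ℕ)
    (hbot : rk ⊥ = 0) (htop : rk ⊤ = r)
    (hcov : ∀ a b : P, a ⋖ b → rk b = rk a + 1)
    (hH : ∀ i : ℕ, (i : ℤ) ≤ (r : ℤ) - 3 →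
      ∀ x : CCR k rk (i + 1) (i + 3), bdryR k rk i (i + 3) x = 0 →
        ∃ y : CCR k rk (i + 2) (i + 3), bdryR k rk (i + 1) (i + 3) y = x) :
    ∀ j : ℕ, ∀ x ∈ cyclesSub k rk (j + 1), dmap k rk j x = 0 →
      (j + 1 < r → ∃ y ∈ cyclesSub k rk (j + 2), dmap k rk (j + 1) y = x) ∧
      (j + 1 = r → x = 0) := by
  have hmono : ∀ a b : P, a < b → rk a < rk b := ZP_rk_strictMono rk hcov
  intro j x hx hdx
  have hdx' : ∀ F' : {F : P // rk F = j},
      (∑ F : {F : P // rk F = j + 1}, (step k j F.1 F'.1) (x F)) = 0 := by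
    intro F'
    rw [← ZP_dmap_apply k rk j x F', hdx]
    rfl
  constructor
  · -- surjectivity
    intro hjr
    have hb1 : ∀ F : {F : P // rk F = j + 1}, ⊥ < F.1 :=
      fun F => ZP_bot_lt rk hbot (by rw [F.2]; omega)
    have ht1 : ∀ F : {F : P // rk F = j + 1}, F.1 < ⊤ :=
      fun F => ZP_lt_top rk htop (by rw [F.2]; omega)
    have hN1 : ∀ F : {F : P // rk F = j + 1}, rk F.1 < j + 3 :=
      fun F => by rw [F.2]; omega
    set Z : CCR k rk (j + 1) (j + 3) := ∑ F : {F : P // rk F = j + 1},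
      Finsupp.lmapDomain k k
        (ZPcons rk hmono (hb1 F) (ht1 F) (hN1 F) :
          DChain P j F.1 → DChainR P rk (j + 1) (j + 3)) (x F) with hZdef
    have hZ0 : bdryR k rk j (j + 3) Z = 0 := by
      rw [hZdef]
      exact ZP_bdryZ_zero k rk hmono hbot htop hjr x hx hdx' hb1 ht1 hN1
    have hZx : ∀ F' : {F : P // rk F = j + 1},
        extractR k rk j (j + 3) F'.1 Z = x F' := by
      intro F'
      have h0 : ∀ b : {F : P // rk F = j + 1}, b ≠ F' →
          extractR k rk j (j + 3) F'.1
            (Finsupp.lmapDomain k k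
              (ZPcons rk hmono (hb1 b) (ht1 b) (hN1 b) :
                DChain P j b.1 → DChainR P rk (j + 1) (j + 3)) (x b)) = 0 :=
        fun b hb => LinearMap.congr_fun
          (ZP_extractR_cons_ne k rk hmono (hb1 b) (ht1 b) (hN1 b)
            (fun e => hb (Subtype.ext e))) (x b)
      calc extractR k rk j (j + 3) F'.1 Z
          = ∑ b : {F : P // rk F = j + 1}, extractR k rk j (j + 3) F'.1
              (Finsupp.lmapDomain k k
                (ZPcons rk hmono (hb1 b) (ht1 b) (hN1 b) :
                  DChain P j b.1 → DChainR P rk (j + 1) (j + 3)) (x b)) := by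
            rw [hZdef]; exact map_sum _ _ _
        _ = _ := Fintype.sum_eq_single F' h0
        _ = x F' := LinearMap.congr_fun
            (ZP_extractR_cons_eq k rk hmono (hb1 F') (ht1 F') (hN1 F')) (x F')
    by_cases hc3 : j + 3 ≤ r
    · -- generic case
      obtain ⟨Y, hY⟩ := hH j (by omega) Z hZ0
      have hb2 : ∀ G : {G : P // rk G = j + 2}, ⊥ < G.1 :=
        fun G => ZP_bot_lt rk hbot (by rw [G.2]; omega)
      have ht2 : ∀ G : {G : P // rk G = j + 2}, G.1 < ⊤ :=
        fun G => ZP_lt_top rk htop (by rw [G.2]; omega)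
      have hN2 : ∀ G : {G : P // rk G = j + 2}, rk G.1 < j + 3 :=
        fun G => by rw [G.2]; omega
      set e : ∀ G : {G : P // rk G = j + 2}, CC k (j + 1) G.1 :=
        fun G => extractR k rk (j + 1) (j + 3) G.1 Y with hedef
      have hdec : Y = ∑ G : {G : P // rk G = j + 2},
          Finsupp.lmapDomain k k
            (ZPcons rk hmono (hb2 G) (ht2 G) (hN2 G) :
              DChain P (j + 1) G.1 → DChainR P rk (j + 2) (j + 3)) (e G) := by
        have h := LinearMap.congr_fun
          (ZP_decompR k rk hmono hbot htop (by omega : j + 2 < r)) Y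
        rw [LinearMap.id_apply, LinearMap.sum_apply] at h
        calc Y = _ := h
          _ = _ := Finset.sum_congr rfl fun G _ => rfl
      have key : ∑ G : {G : P // rk G = j + 2},
          (Finsupp.lmapDomain k k
              (ZPiota rk hmono (le_of_lt (hN2 G)) :
                DChain P (j + 1) G.1 → DChainR P rk (j + 1) (j + 3)) (e G)
            - Finsupp.lmapDomain k k
                (ZPcons rk hmono (hb2 G) (ht2 G) (hN2 G) :
                  DChain P j G.1 → DChainR P rk (j + 1) (j + 3))
                (bdry k j G.1 (e G))) = Z := by
        rw [← hY]
        conv_rhs => rw [hdec]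
        rw [map_sum]
        exact Finset.sum_congr rfl fun G _ =>
          (LinearMap.congr_fun (ZP_bdryR_cons_succ k rk (N := j + 3) hmono
            (hb2 G) (ht2 G) (hN2 G)) (e G)).symm
      refine ⟨e, ?_, ?_⟩
      · refine Submodule.mem_pi.mpr fun G _ => ?_
        have hAz : ∀ G' : {G : P // rk G = j + 2},
            extractR k rk j (j + 3) G.1
              (Finsupp.lmapDomain k k
                (ZPiota rk hmono (le_of_lt (hN2 G')) :
                  DChain P (j + 1) G'.1 → DChainR P rk (j + 1) (j + 3)) (e G')) = 0 :=
          fun G' => (LinearMap.congr_fun (ZP_extractR_iota k rk hmono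
              (le_of_lt (hN2 G'))) (e G')).trans
            (LinearMap.congr_fun (ZP_phiMap_zero k rk hmono
              (by rw [G'.2, G.2] : rk G'.1 ≤ rk G.1)) (e G'))
        have hBne : ∀ G' : {G : P // rk G = j + 2}, G' ≠ G →
            extractR k rk j (j + 3) G.1
              (Finsupp.lmapDomain k k
                (ZPcons rk hmono (hb2 G') (ht2 G') (hN2 G') :
                  DChain P j G'.1 → DChainR P rk (j + 1) (j + 3))
                (bdry k j G'.1 (e G'))) = 0 :=
          fun G' hne => LinearMap.congr_fun (ZP_extractR_cons_ne k rk hmono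
            (hb2 G') (ht2 G') (hN2 G') (fun eq => hne (Subtype.ext eq))) _
        have hBeq : extractR k rk j (j + 3) G.1
            (Finsupp.lmapDomain k k
              (ZPcons rk hmono (hb2 G) (ht2 G) (hN2 G) :
                DChain P j G.1 → DChainR P rk (j + 1) (j + 3))
              (bdry k j G.1 (e G))) = bdry k j G.1 (e G) :=
          LinearMap.congr_fun (ZP_extractR_cons_eq k rk hmono (hb2 G) (ht2 G) (hN2 G)) _
        have hZzero : extractR k rk j (j + 3) G.1 Z = 0 := by
          rw [hZdef]
          rw [map_sum]
          refine Finset.sum_eq_zero fun F _ => ?_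
          refine LinearMap.congr_fun (ZP_extractR_cons_ne k rk hmono
            (hb1 F) (ht1 F) (hN1 F) (fun eq => ?_)) (x F)
          have h1 : rk F.1 = rk G.1 := congrArg rk eq
          rw [F.2, G.2] at h1; omega
        have h := congrArg (extractR k rk j (j + 3) G.1) key
        rw [map_sum] at h
        simp only [map_sub, hAz, zero_sub, Finset.sum_neg_distrib] at h
        rw [Fintype.sum_eq_single G hBne, hBeq, hZzero] at h
        have hb0 : bdry k j G.1 (e G) = 0 := neg_eq_zero.mp h
        show e G ∈ cycles k (j + 1) G.1
        simp only [cycles]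
        exact LinearMap.mem_ker.mpr hb0
      · funext F'
        rw [ZP_dmap_apply k rk (j + 1) _ F']
        have hAp : ∀ G : {G : P // rk G = j + 2},
            extractR k rk j (j + 3) F'.1
              (Finsupp.lmapDomain k k
                (ZPiota rk hmono (le_of_lt (hN2 G)) :
                  DChain P (j + 1) G.1 → DChainR P rk (j + 1) (j + 3)) (e G))
              = phiMap k j G.1 F'.1 (e G) :=
          fun G => LinearMap.congr_fun (ZP_extractR_iota k rk hmono (le_of_lt (hN2 G))) (e G)
        have hBz : ∀ G : {G : P // rk G = j + 2},
            extractR k rk j (j + 3) F'.1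
              (Finsupp.lmapDomain k k
                (ZPcons rk hmono (hb2 G) (ht2 G) (hN2 G) :
                  DChain P j G.1 → DChainR P rk (j + 1) (j + 3))
                (bdry k j G.1 (e G))) = 0 :=
          fun G => LinearMap.congr_fun (ZP_extractR_cons_ne k rk hmono
            (hb2 G) (ht2 G) (hN2 G) (fun eq => by
              have h1 : rk G.1 = rk F'.1 := congrArg rk eq
              rw [G.2, F'.2] at h1; omega)) _
        have h := congrArg (extractR k rk j (j + 3) F'.1) key
        rw [map_sum] at h
        simp only [map_sub, hAp, hBz, sub_zero] at h
        rw [hZx F'] at h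
        calc ∑ G : {G : P // rk G = j + 2}, step k (j + 1) G.1 F'.1 (e G)
            = ∑ G : {G : P // rk G = j + 2}, phiMap k j G.1 F'.1 (e G) :=
              Finset.sum_congr rfl fun G _ => rfl
          _ = x F' := h
    · -- special case r = j + 2
      have hGe : ∀ G : {G : P // rk G = j + 2}, ⊤ ≤ G.1 :=
        fun G => (ZP_top_of_rk rk hmono htop (by rw [G.2]; omega)).ge
      refine ⟨fun G => Finsupp.lmapDomain k k
        (ZPtoUnder rk G.1 (hGe G) : DChainR P rk (j + 1) (j + 3) → DChain P (j + 1) G.1) Z,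
        ?_, ?_⟩
      · refine Submodule.mem_pi.mpr fun G _ => ?_
        have h1 := LinearMap.congr_fun (ZP_bdry_toUnder k rk (N := j + 3) (hGe G)) Z
        simp only [LinearMap.comp_apply] at h1
        rw [hZ0, map_zero] at h1
        show Finsupp.lmapDomain k k
          (ZPtoUnder rk G.1 (hGe G) : DChainR P rk (j + 1) (j + 3) → DChain P (j + 1) G.1) Z
            ∈ cycles k (j + 1) G.1
        simp only [cycles]
        exact LinearMap.mem_ker.mpr h1
      · funext F'
        rw [ZP_dmap_apply k rk (j + 1) _ F']
        have hT : rk (⊤ : P) = j + 2 := by rw [htop]; omega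
        rw [Fintype.sum_eq_single (⟨⊤, hT⟩ : {G : P // rk G = j + 2})
          (fun b hb => absurd (Subtype.ext (ZP_top_of_rk rk hmono htop
            (by rw [b.2]; omega))) hb)]
        exact (LinearMap.congr_fun (ZP_phiMap_toUnder k rk (N := j + 3)
          (hGe ⟨⊤, hT⟩)) Z).trans (hZx F')
  · -- injectivity
    intro hjr
    funext F
    show x F = 0
    rcases F with ⟨F1, hF1⟩
    have hFT : F1 = ⊤ := ZP_top_of_rk rk hmono htop (by rw [hF1]; omega)
    cases j with
    | zero =>
      set v : CC k 0 F1 := x ⟨F1, hF1⟩ with hvdef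
      have h := hdx' ⟨⊥, hbot⟩
      rw [Fintype.sum_eq_single (⟨F1, hF1⟩ : {F : P // rk F = 0 + 1})
        (fun b hb => absurd (Subtype.ext ((ZP_top_of_rk rk hmono htop
          (by rw [b.2]; omega)).trans (ZP_top_of_rk rk hmono htop
          (by rw [hF1]; omega)).symm)) hb)] at h
      have h4 : relabel k F1 ⊥ v = 0 := by
        simpa [step] using h
      have hv := Finsupp.unique_single v
      have h6 : relabel k F1 ⊥ v
          = (v default) • Finsupp.single (ZPempty (⊥ : P)) (1 : k) := by
        conv_lhs => rw [hv]
        rw [show Finsupp.single (default : DChain P 0 F1) (v default)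
            = (v default) • Finsupp.single (default : DChain P 0 F1) (1 : k) by
            rw [Finsupp.smul_single', mul_one],
          map_smul, ZP_relabel_single k _]
      rw [h6, Finsupp.smul_single', mul_one] at h4
      have h8 := Finsupp.single_eq_zero.mp h4
      rw [hv, h8, Finsupp.single_zero]
    | succ m =>
      have hphi : ∀ F' : {F : P // rk F = m + 1},
          phiMap k m F1 F'.1 (x ⟨F1, hF1⟩) = 0 := by
        intro F'
        have h := hdx' F'
        rw [Fintype.sum_eq_single (⟨F1, hF1⟩ : {F : P // rk F = m + 1 + 1})
          (fun b hb => absurd (Subtype.ext ((ZP_top_of_rk rk hmono htop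
            (by rw [b.2]; omega)).trans (ZP_top_of_rk rk hmono htop
            (by rw [hF1]; omega)).symm)) hb)] at h
        exact h
      have hdecT := LinearMap.congr_fun
        (ZP_decompTop k rk (G := F1) hmono hbot hFT.ge hF1) (x ⟨F1, hF1⟩)
      rw [LinearMap.id_apply, LinearMap.sum_apply] at hdecT
      rw [hdecT]
      refine Finset.sum_eq_zero fun F' _ => ?_
      rw [LinearMap.comp_apply, hphi F', map_zero]

end
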